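/- Let p ∈ (1,2) and a > 0, let f = f(·,a) be the unique solution of (|f'|^{p-2} f')' + f - |f'|^{p-1} = 0 on (0,∞) with f(0) = a, f'(0) = 0, let R(a) := inf{r > 0 : f(r) = 0}, and let ψ = ψ(·,a) be defined on [0,1) by ψ(1-f(r)/a) = |f'(r)|^p/a^p. Then the function z ↦ ψ(1-z)^{-1/p} belongs to L¹(z₀,1) for every z₀ ∈ (0,1), and for every r ∈ [0,R(a)) one has the identity ∫_{f(r)/a}^{1} ψ(1-z)^{-1/p} dz = r. -/

import Mathlib

open Set Filter Topology MeasureTheory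

/-- The extinction "radius" `R = inf{r > 0 : f(r) = 0}`, as an extended real number
(`⊤` when `f` does not vanish on `(0,∞)`). -/
noncomputable def extTime (f : ℝ → ℝ) : EReal :=
  sInf {x : EReal | ∃ r : ℝ, 0 < r ∧ f r = 0 ∧ x = (r : EReal)}

/-- `f` solves `(|f'|^{p-2} f')' + f - |f'|^{p-1} = 0` on `(0,∞)` with `f(0)=a`, `f'(0)=0`;
`fd` is the derivative of `f` and `gd` the derivative of `|f'|^{p-2} f'`, both continuous
on `[0,∞)`, so that `f ∈ C¹([0,∞))` and `|f'|^{p-2} f' ∈ C¹([0,∞))`. -/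
def IsSol (p a : ℝ) (f fd gd : ℝ → ℝ) : Prop :=
  (∀ r ∈ Set.Ici (0:ℝ), HasDerivWithinAt f (fd r) (Set.Ici 0) r) ∧
  ContinuousOn fd (Set.Ici 0) ∧
  (∀ r ∈ Set.Ici (0:ℝ), HasDerivWithinAt (fun s => |fd s| ^ (p-2) * fd s) (gd r) (Set.Ici 0) r) ∧
  ContinuousOn gd (Set.Ici 0) ∧
  (∀ r ∈ Set.Ioi (0:ℝ), gd r + f r - |fd r| ^ (p-1) = 0) ∧
  f 0 = a ∧ fd 0 = 0

/-- `ψ` is the function associated with `f = f(·,a)` via `ψ(1 - f(r)/a) = |f'(r)|^p/a^p`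
for `r ∈ [0,R(a))`. -/
def PsiRel (p a : ℝ) (f fd ψ : ℝ → ℝ) : Prop :=
  ∀ r : ℝ, 0 ≤ r → (r : EReal) < extTime f → ψ (1 - f r / a) = |fd r| ^ p / a ^ p

section Aux
variable {p a : ℝ} {f fd gd : ℝ → ℝ}

lemma aux_abs_G (hp : p ∈ Set.Ioo (1:ℝ) 2) (x : ℝ) :
    |(|fd x| ^ (p-2) * fd x)| = |fd x| ^ (p-1) := by
  rcases eq_or_ne (fd x) 0 with h | h
  · rw [h]
    simp [Real.zero_rpow (show p - 1 ≠ 0 by nlinarith [hp.1])]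
  · have h0 : (0:ℝ) < |fd x| := abs_pos.mpr h
    rw [abs_mul, abs_of_nonneg (Real.rpow_nonneg (abs_nonneg _) _)]
    nth_rewrite 2 [show |fd x| = |fd x| ^ (1:ℝ) by rw [Real.rpow_one]]
    rw [← Real.rpow_add h0]
    ring_nf

lemma aux_G_neg_iff (hp : p ∈ Set.Ioo (1:ℝ) 2) (x : ℝ) :
    |fd x| ^ (p-2) * fd x < 0 → fd x < 0 := by
  intro h
  by_contra hge
  push_neg at hge
  exact absurd (mul_nonneg (Real.rpow_nonneg (abs_nonneg _) _) hge) (not_le.mpr h)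

lemma aux_G_eq_neg (hp : p ∈ Set.Ioo (1:ℝ) 2) {x : ℝ} (h : |fd x| ^ (p-2) * fd x < 0) :
    |fd x| ^ (p-2) * fd x = -(|fd x| ^ (p-1)) := by
  rw [← aux_abs_G (fd := fd) hp x, abs_of_neg h, neg_neg]

lemma contf (hf : IsSol p a f fd gd) : ContinuousOn f (Set.Ici 0) :=
  fun x hx => (hf.1 x hx).continuousWithinAt

lemma contG (hf : IsSol p a f fd gd) :
    ContinuousOn (fun s => |fd s| ^ (p-2) * fd s) (Set.Ici 0) :=
  fun x hx => (hf.2.2.1 x hx).continuousWithinAt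

lemma G_zero (hp : p ∈ Set.Ioo (1:ℝ) 2) (hf : IsSol p a f fd gd) :
    |fd 0| ^ (p-2) * fd 0 = 0 := by
  rw [hf.2.2.2.2.2.2, mul_zero]

lemma gd_eq (hf : IsSol p a f fd gd) {x : ℝ} (hx : 0 < x) :
    gd x = |fd x| ^ (p-1) - f x := by
  have := hf.2.2.2.2.1 x hx
  linarith

lemma gd_zero (hp : p ∈ Set.Ioo (1:ℝ) 2) (ha : 0 < a) (hf : IsSol p a f fd gd) : gd 0 = -a := by
  have h1 : Tendsto gd (𝓝[>] (0:ℝ)) (𝓝 (gd 0)) :=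
    ((hf.2.2.2.1 0 Set.self_mem_Ici).mono Ioi_subset_Ici_self).tendsto
  have hcont : ContinuousWithinAt (fun x => |fd x| ^ (p-1) - f x) (Set.Ici 0) 0 := by
    have h3 : ContinuousWithinAt fd (Set.Ici 0) 0 := hf.2.1 0 Set.self_mem_Ici
    have h4 : ContinuousAt (fun y : ℝ => |y| ^ (p-1)) (fd 0) :=
      (Real.continuousAt_rpow_const _ _ (Or.inr (by linarith [hp.1]))).comp
        continuous_abs.continuousAt
    exact ((h4.comp_continuousWithinAt h3)).sub ((contf hf) 0 Set.self_mem_Ici)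
  have h2 : Tendsto gd (𝓝[>] (0:ℝ)) (𝓝 (-a)) := by
    have heq : ∀ᶠ x in 𝓝[>] (0:ℝ), (fun y => |fd y| ^ (p-1) - f y) x = gd x := by
      filter_upwards [self_mem_nhdsWithin] with x hx
      rw [← gd_eq hf hx]
    have hlim : Tendsto (fun y => |fd y| ^ (p-1) - f y) (𝓝[>] (0:ℝ)) (𝓝 (-a)) := by
      have := hcont.tendsto.mono_left (nhdsWithin_mono _ Ioi_subset_Ici_self)
      simpa [hf.2.2.2.2.2.2, hf.2.2.2.2.2.1,
        Real.zero_rpow (show p - 1 ≠ 0 by nlinarith [hp.1])] using this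
    exact Tendsto.congr' heq hlim
  exact tendsto_nhds_unique h1 h2

end Aux

section Main
variable {p a : ℝ} {f fd gd ψ : ℝ → ℝ}

lemma G_neg (hp : p ∈ Set.Ioo (1:ℝ) 2) (ha : 0 < a) (hf : IsSol p a f fd gd)
    {b : ℝ} (hbpos : ∀ s ∈ Set.Icc 0 b, 0 < f s) :
    ∀ s ∈ Set.Ioc (0:ℝ) b, |fd s| ^ (p-2) * fd s < 0 := by
  set G : ℝ → ℝ := fun s => |fd s| ^ (p-2) * fd s with hG
  by_contra hcon
  push_neg at hcon
  obtain ⟨r₂, hr₂, hGr₂⟩ := hcon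
  -- small interval negativity from gd 0 = -a < 0
  have hd0 : HasDerivWithinAt G (gd 0) (Set.Ici 0) 0 := hf.2.2.1 0 Set.self_mem_Ici
  have hslope : Tendsto (slope G 0) (𝓝[>] (0:ℝ)) (𝓝 (-a)) := by
    have := hasDerivWithinAt_iff_tendsto_slope.mp hd0
    rwa [Set.Ici_sdiff_left, gd_zero hp ha hf] at this
  have hev : ∀ᶠ s in 𝓝[>] (0:ℝ), slope G 0 s < 0 :=
    hslope.eventually_lt_const (by linarith)
  obtain ⟨δ, hδpos, hδ⟩ : ∃ δ > 0, ∀ s ∈ Set.Ioo 0 δ, G s < 0 := by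
    obtain ⟨u, hu, hsub⟩ := mem_nhdsGT_iff_exists_Ioo_subset.mp hev
    refine ⟨u, hu, fun s hs => ?_⟩
    have hsl : slope G 0 s < 0 := hsub hs
    have hs0 : (0:ℝ) < s := hs.1
    have hG0 : G 0 = 0 := G_zero hp hf
    rw [slope_def_field, hG0, sub_zero, sub_zero, div_neg_iff] at hsl
    rcases hsl with ⟨_, h2⟩ | ⟨h1, _⟩
    · linarith
    · exact h1
  -- the first point where G ≥ 0
  set T : Set ℝ := {s | 0 < s ∧ s ≤ r₂ ∧ 0 ≤ G s} with hT
  have hTne : T.Nonempty := ⟨r₂, hr₂.1, le_rfl, hGr₂⟩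
  have hTbdd : BddBelow T := ⟨0, fun s hs => hs.1.le⟩
  set t : ℝ := sInf T with ht
  have hδle : ∀ s ∈ T, δ ≤ s := by
    intro s hs
    by_contra hlt
    push_neg at hlt
    exact absurd hs.2.2 (not_le.mpr (hδ s ⟨hs.1, hlt⟩))
  have htδ : δ ≤ t := le_csInf hTne hδle
  have htpos : 0 < t := lt_of_lt_of_le hδpos htδ
  have htr₂ : t ≤ r₂ := csInf_le hTbdd ⟨hr₂.1, le_rfl, hGr₂⟩
  have hcontG : ContinuousAt G t := (contG hf).continuousAt (Ici_mem_nhds htpos)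
  -- G t ≥ 0 via approximating sequence
  have hGt0 : 0 ≤ G t := by
    have hseq : ∀ n : ℕ, ∃ s ∈ T, s < t + 1/(n+1) := by
      intro n
      have h1 : t < t + 1/(n+1) := by
        have : (0:ℝ) < 1/((n:ℝ)+1) := by positivity
        linarith
      exact exists_lt_of_csInf_lt hTne (by exact h1)
    choose seq hseqT hseqlt using hseq
    have hseq_ge : ∀ n, t ≤ seq n := fun n => csInf_le hTbdd (hseqT n)
    have hseqto : Tendsto seq atTop (𝓝 t) := by
      have h0 : Tendsto (fun n : ℕ => t + 1/((n:ℝ)+1)) atTop (𝓝 t) := by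
        have h1 : Tendsto (fun n : ℕ => 1/((n:ℝ)+1)) atTop (𝓝 0) :=
          tendsto_one_div_add_atTop_nhds_zero_nat
        simpa using tendsto_const_nhds.add h1
      exact tendsto_of_tendsto_of_tendsto_of_le_of_le tendsto_const_nhds h0
        hseq_ge (fun n => (hseqlt n).le)
    have hlim : Tendsto (fun n => G (seq n)) atTop (𝓝 (G t)) := hcontG.tendsto.comp hseqto
    exact ge_of_tendsto hlim (Eventually.of_forall fun n => (hseqT n).2.2)
  -- G < 0 strictly before t
  have hGneg : ∀ s ∈ Set.Ioo (0:ℝ) t, G s < 0 := by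
    intro s hs
    by_contra hge
    push_neg at hge
    have hsT : s ∈ T := ⟨hs.1, le_trans hs.2.le htr₂, hge⟩
    exact absurd (csInf_le hTbdd hsT) (not_le.mpr hs.2)
  -- G t ≤ 0 by left limit
  have hGt0' : G t ≤ 0 := by
    have h1 : Tendsto G (𝓝[<] t) (𝓝 (G t)) := hcontG.tendsto.mono_left nhdsWithin_le_nhds
    refine le_of_tendsto h1 ?_
    filter_upwards [Ioo_mem_nhdsLT_of_mem (show t ∈ Set.Ioc 0 t from ⟨htpos, le_rfl⟩)] with s hs
    exact (hGneg s hs).le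
  have hGt : G t = 0 := le_antisymm hGt0' hGt0
  -- strictly decreasing auxiliary function w = exp * G on [0,t]
  set w : ℝ → ℝ := fun s => Real.exp s * G s with hw
  have hanti : StrictAntiOn w (Set.Icc 0 t) := by
    refine strictAntiOn_of_deriv_neg (convex_Icc 0 t) ?_ ?_
    · exact Real.continuous_exp.continuousOn.mul ((contG hf).mono (Set.Icc_subset_Ici_self))
    · intro x hx
      rw [interior_Icc] at hx
      have hGd : HasDerivAt G (gd x) x :=
        (hf.2.2.1 x (le_of_lt hx.1)).hasDerivAt (Ici_mem_nhds hx.1)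
      have hwd : HasDerivAt w (Real.exp x * G x + Real.exp x * gd x) x := by
        exact (Real.hasDerivAt_exp x).mul hGd
      rw [hwd.deriv]
      have hGx : G x < 0 := hGneg x hx
      have hgdx : gd x = |fd x| ^ (p-1) - f x := gd_eq hf hx.1
      have habs : |fd x| ^ (p-1) = -G x := by
        rw [← aux_abs_G (fd := fd) hp x, abs_of_neg hGx]
      have hfx : 0 < f x := hbpos x ⟨hx.1.le, le_trans hx.2.le (le_trans htr₂ hr₂.2)⟩
      have hexp : 0 < Real.exp x := Real.exp_pos x
      rw [hgdx, habs]
      nlinarith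
  have h0m : (0:ℝ) ∈ Set.Icc (0:ℝ) t := ⟨le_rfl, htpos.le⟩
  have htm : t ∈ Set.Icc (0:ℝ) t := ⟨htpos.le, le_rfl⟩
  have hwlt := hanti h0m htm htpos
  rw [hw] at hwlt
  simp only [Real.exp_zero, one_mul, G_zero hp hf, hGt, mul_zero] at hwlt

  have hG00 : G 0 = 0 := G_zero hp hf
  rw [hG00] at hwlt
  exact lt_irrefl 0 hwlt

lemma fd_neg (hp : p ∈ Set.Ioo (1:ℝ) 2) (ha : 0 < a) (hf : IsSol p a f fd gd)
    {b : ℝ} (hbpos : ∀ s ∈ Set.Icc 0 b, 0 < f s) :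
    ∀ s ∈ Set.Ioc (0:ℝ) b, fd s < 0 :=
  fun s hs => aux_G_neg_iff hp s (G_neg hp ha hf hbpos s hs)

lemma f_anti (hp : p ∈ Set.Ioo (1:ℝ) 2) (ha : 0 < a) (hf : IsSol p a f fd gd)
    {b : ℝ} (hbpos : ∀ s ∈ Set.Icc 0 b, 0 < f s) :
    StrictAntiOn f (Set.Icc 0 b) := by
  refine strictAntiOn_of_deriv_neg (convex_Icc 0 b) ((contf hf).mono Set.Icc_subset_Ici_self) ?_
  intro x hx
  rw [interior_Icc] at hx
  have hfd : HasDerivAt f (fd x) x := (hf.1 x hx.1.le).hasDerivAt (Ici_mem_nhds hx.1)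
  rw [hfd.deriv]
  exact fd_neg hp ha hf hbpos x ⟨hx.1, hx.2.le⟩

lemma f_pos (ha : 0 < a) (hf : IsSol p a f fd gd) :
    ∀ r : ℝ, 0 ≤ r → (r : EReal) < extTime f → 0 < f r := by
  intro r hr hre
  by_contra hle
  push_neg at hle
  have hr0 : r ≠ 0 := by
    intro h
    rw [h, hf.2.2.2.2.2.1] at hle
    linarith
  have hrpos : 0 < r := lt_of_le_of_ne hr (Ne.symm hr0)
  rcases eq_or_lt_of_le hle with heq | hlt
  · have : extTime f ≤ (r : EReal) := sInf_le ⟨r, hrpos, heq, rfl⟩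
    exact absurd hre (not_lt.mpr this)
  · have hIVT : (0:ℝ) ∈ Set.Ioo (f r) (f 0) := by
      rw [hf.2.2.2.2.2.1]; exact ⟨hlt, ha⟩
    obtain ⟨s, hs, hfs⟩ := intermediate_value_Ioo' hr
      ((contf hf).mono (Set.Icc_subset_Ici_self)) hIVT
    have h1 : extTime f ≤ (s : EReal) := sInf_le ⟨s, hs.1, hfs, rfl⟩
    have h2 : (s : EReal) < (r : EReal) := by exact_mod_cast hs.2
    exact absurd hre (not_lt.mpr (le_trans h1 h2.le))

lemma small_f (hp : p ∈ Set.Ioo (1:ℝ) 2) (ha : 0 < a) (hf : IsSol p a f fd gd)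
    (hnz : ∀ s : ℝ, 0 < s → f s ≠ 0) :
    ∀ L : ℝ, 0 < L → ∃ s : ℝ, 0 ≤ s ∧ f s < L := by
  intro L hL
  by_contra hcon
  push_neg at hcon
  have hfpos : ∀ s : ℝ, 0 ≤ s → 0 < f s := fun s hs => lt_of_lt_of_le hL (hcon s hs)
  set G : ℝ → ℝ := fun s => |fd s| ^ (p-2) * fd s with hG
  have hGneg : ∀ s : ℝ, 0 < s → G s < 0 := fun s hs =>
    G_neg hp ha hf (fun x hx => hfpos x hx.1) s ⟨hs, le_rfl⟩
  have hfdneg : ∀ s : ℝ, 0 < s → fd s < 0 := fun s hs => aux_G_neg_iff hp s (hGneg s hs)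
  -- u = exp s * (G s + L) is antitone on [0, ∞)
  set u : ℝ → ℝ := fun s => Real.exp s * (G s + L) with hu
  have huanti : AntitoneOn u (Set.Ici 0) := by
    have hdiff : ∀ x ∈ Set.Ioi (0:ℝ), HasDerivAt u (Real.exp x * (G x + L) + Real.exp x * gd x) x := by
      intro x hx
      have hGd : HasDerivAt G (gd x) x :=
        (hf.2.2.1 x (Set.mem_Ici.mpr (le_of_lt hx))).hasDerivAt (Ici_mem_nhds hx)
      exact (Real.hasDerivAt_exp x).mul (hGd.add_const L)
    refine antitoneOn_of_deriv_nonpos (convex_Ici 0) ?_ ?_ ?_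
    · exact Real.continuous_exp.continuousOn.mul
        (((contG hf).add continuousOn_const))
    · rw [interior_Ici]
      exact fun x hx => (hdiff x hx).differentiableAt.differentiableWithinAt
    · rw [interior_Ici]
      intro x hx
      rw [(hdiff x hx).deriv]
      have hGx : G x < 0 := hGneg x hx
      have hgdx : gd x = |fd x| ^ (p-1) - f x := gd_eq hf hx
      have habs : |fd x| ^ (p-1) = -G x := by
        rw [← aux_abs_G (fd := fd) hp x, abs_of_neg hGx]
      have hfx : L ≤ f x := hcon x hx.le
      have hexp : 0 < Real.exp x := Real.exp_pos x
      rw [hgdx, habs]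
      nlinarith
  have hu0 : u 0 = L := by
    have hG00 : G 0 = 0 := G_zero hp hf
    simp [hu, hG00]
  -- hence G s ≤ -L/2 for s ≥ log 2
  have hGsmall : ∀ s : ℝ, Real.log 2 ≤ s → G s ≤ -(L/2) := by
    intro s hs
    have hspos : (0:ℝ) < s := lt_of_lt_of_le (Real.log_pos (by norm_num)) hs
    have h1 : u s ≤ L := by
      have := huanti Set.self_mem_Ici (Set.mem_Ici.mpr hspos.le) hspos.le
      rwa [hu0] at this
    have hexp2 : (2:ℝ) ≤ Real.exp s := by
      rw [show (2:ℝ) = Real.exp (Real.log 2) by rw [Real.exp_log]; norm_num]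
      exact Real.exp_le_exp.mpr hs
    have hexp : 0 < Real.exp s := Real.exp_pos s
    rw [hu] at h1
    simp only at h1
    nlinarith [hGneg s hspos]
  -- hence fd s ≤ -c for s ≥ log 2, where c = (L/2)^(1/(p-1))
  set c : ℝ := (L/2) ^ ((1:ℝ)/(p-1)) with hc
  have hcpos : 0 < c := Real.rpow_pos_of_pos (by linarith) _
  have hfdsmall : ∀ s : ℝ, Real.log 2 ≤ s → fd s ≤ -c := by
    intro s hs
    have hspos : (0:ℝ) < s := lt_of_lt_of_le (Real.log_pos (by norm_num)) hs
    have habs : |fd s| ^ (p-1) = -G s := by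
      rw [← aux_abs_G (fd := fd) hp s, abs_of_neg (hGneg s hspos)]
    have h1 : L/2 ≤ |fd s| ^ (p-1) := by
      rw [habs]
      linarith [hGsmall s hs]
    have h2 : c ≤ |fd s| := by
      have h3 := Real.rpow_le_rpow (by linarith : (0:ℝ) ≤ L/2) h1
        (one_div_pos.mpr (by linarith [hp.1] : (0:ℝ) < p - 1)).le
      rwa [← Real.rpow_mul (abs_nonneg _), mul_one_div, div_self
        (by nlinarith [hp.1] : p - 1 ≠ 0), Real.rpow_one] at h3
    have h4 : fd s < 0 := hfdneg s hspos
    rw [abs_of_neg h4] at h2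
    linarith
  -- v = f + c * id is antitone on [log 2, ∞), forcing f below L
  set S : ℝ := Real.log 2 with hS
  have hSpos : 0 < S := Real.log_pos (by norm_num)
  set v : ℝ → ℝ := fun s => f s + c * s with hv
  have hvanti : AntitoneOn v (Set.Ici S) := by
    have hdiff : ∀ x ∈ Set.Ioi S, HasDerivAt v (fd x + c) x := by
      intro x hx
      have hx0 : 0 < x := lt_trans hSpos hx
      have h1 : HasDerivAt f (fd x) x := (hf.1 x hx0.le).hasDerivAt (Ici_mem_nhds hx0)
      have h5 := h1.add ((hasDerivAt_id x).const_mul c)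
      simp only [mul_one] at h5
      exact h5
    refine antitoneOn_of_deriv_nonpos (convex_Ici S) ?_ ?_ ?_
    · refine ContinuousOn.add ((contf hf).mono ?_) (Continuous.continuousOn (by continuity))
      exact fun x hx => le_trans hSpos.le hx
    · rw [interior_Ici]
      exact fun x hx => (hdiff x hx).differentiableAt.differentiableWithinAt
    · rw [interior_Ici]
      intro x hx
      rw [(hdiff x hx).deriv]
      linarith [hfdsmall x (le_of_lt hx)]
  obtain ⟨t, htd⟩ : ∃ t : ℝ, t = S + (f S + 1)/c := ⟨_, rfl⟩
  have htS : S ≤ t := by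
    have : 0 < (f S + 1)/c := div_pos (by linarith [hfpos S hSpos.le]) hcpos
    linarith
  have h1 : v t ≤ v S := hvanti Set.self_mem_Ici (Set.mem_Ici.mpr htS) htS
  rw [hv] at h1
  simp only at h1
  have h2 : f t ≤ f S - (f S + 1) := by
    have hct : c * t = c * S + (f S + 1) := by
      rw [htd]; field_simp
    nlinarith
  have h3 : 0 < f t := hfpos t (le_trans hSpos.le htS)
  linarith

lemma key_lemma (hp : p ∈ Set.Ioo (1:ℝ) 2) (ha : 0 < a) (hf : IsSol p a f fd gd)
    (hrel : PsiRel p a f fd ψ) {r : ℝ} (hr : 0 < r) (hre : (r : EReal) < extTime f) :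
    IntegrableOn (fun z => ψ (1-z) ^ (-(1/p))) (Set.Ioo (f r / a) 1) volume ∧
      ∫ z in Set.Ioo (f r / a) 1, ψ (1-z) ^ (-(1/p)) = r := by
  have hp1 : (0:ℝ) < p - 1 := by linarith [hp.1]
  have hp0 : (0:ℝ) < p := by linarith [hp.1]
  set h : ℝ → ℝ := fun z => ψ (1-z) ^ (-(1/p)) with hh
  set φ : ℝ → ℝ := fun s => f s / a with hφ
  have hfpos : ∀ s ∈ Set.Icc (0:ℝ) r, 0 < f s := by
    intro s hs
    exact f_pos ha hf s hs.1 (lt_of_le_of_lt (EReal.coe_le_coe_iff.mpr hs.2) hre)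
  have hanti : StrictAntiOn f (Set.Icc 0 r) := f_anti hp ha hf hfpos
  have hfd : ∀ s ∈ Set.Ioc (0:ℝ) r, fd s < 0 := fd_neg hp ha hf hfpos
  -- per-ε facts
  have main : ∀ ε ∈ Set.Ioo (0:ℝ) r,
      (IntegrableOn h (Set.Ioo (φ r) (φ ε)) volume ∧
        ∫ z in Set.Ioo (φ r) (φ ε), h z = r - ε) ∧
        ∀ x ∈ Set.Ioo (φ r) (φ ε), 0 ≤ h x := by
    intro ε hε
    have hderiv : ∀ x ∈ Set.Ioo ε r, HasDerivWithinAt φ (fd x / a) (Set.Ioo ε r) x := by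
      intro x hx
      have hx0 : (0:ℝ) < x := lt_trans hε.1 hx.1
      exact ((hf.1 x hx0.le).mono (fun y hy => le_trans hε.1.le hy.1.le)).div_const a
    have hinj : Set.InjOn φ (Set.Ioo ε r) := by
      intro x hx y hy hxy
      have hx' : x ∈ Set.Icc (0:ℝ) r := ⟨(lt_trans hε.1 hx.1).le, hx.2.le⟩
      have hy' : y ∈ Set.Icc (0:ℝ) r := ⟨(lt_trans hε.1 hy.1).le, hy.2.le⟩
      have : f x = f y := by
        exact (div_left_inj' ha.ne').mp hxy
      exact hanti.injOn hx' hy' this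
    have hεm : ε ∈ Set.Icc (0:ℝ) r := ⟨hε.1.le, hε.2.le⟩
    have hrm : r ∈ Set.Icc (0:ℝ) r := ⟨hr.le, le_rfl⟩
    have himg : φ '' Set.Ioo ε r = Set.Ioo (φ r) (φ ε) := by
      apply Set.Subset.antisymm
      · rintro _ ⟨x, hx, rfl⟩
        have hx' : x ∈ Set.Icc (0:ℝ) r := ⟨(lt_trans hε.1 hx.1).le, hx.2.le⟩
        constructor
        · exact div_lt_div_of_pos_right (hanti hx' hrm hx.2) ha
        · exact div_lt_div_of_pos_right (hanti hεm hx' hx.1) ha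
      · have hc : ContinuousOn φ (Set.Icc ε r) := by
          apply ContinuousOn.div_const
          exact (contf hf).mono (fun y hy => le_trans hε.1.le hy.1)
        exact intermediate_value_Ioo' hε.2.le hc
    have hpoint : Set.EqOn (fun x => |fd x / a| • h (φ x)) (fun _ => (1:ℝ)) (Set.Ioo ε r) := by
      intro x hx
      have hx0 : (0:ℝ) < x := lt_trans hε.1 hx.1
      have hxe : (x : EReal) < extTime f := lt_trans (EReal.coe_lt_coe_iff.mpr hx.2) hre
      have hb : 0 < |fd x| := abs_pos.mpr (ne_of_lt (hfd x ⟨hx0, hx.2.le⟩))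
      have hψ : ψ (1 - f x / a) = |fd x| ^ p / a ^ p := hrel x hx0.le hxe
      have hval : h (φ x) = a / |fd x| := by
        simp only [hh, hφ]
        rw [hψ, ← Real.div_rpow (abs_nonneg _) ha.le,
          ← Real.rpow_mul (div_nonneg (abs_nonneg _) ha.le),
          show p * -(1/p) = -1 by field_simp, Real.rpow_neg_one, inv_div]
      simp only [hval, smul_eq_mul, abs_div, abs_of_pos ha]
      field_simp
    have hmeas : MeasurableSet (Set.Ioo ε r) := measurableSet_Ioo
    constructor
    constructor
    · rw [← himg, MeasureTheory.integrableOn_image_iff_integrableOn_abs_deriv_smul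
        hmeas hderiv hinj h]
      rw [integrableOn_congr_fun hpoint hmeas]
      exact integrableOn_const measure_Ioo_lt_top.ne
    · rw [← himg, MeasureTheory.integral_image_eq_integral_abs_deriv_smul hmeas hderiv hinj h,
        MeasureTheory.setIntegral_congr_fun hmeas hpoint, MeasureTheory.setIntegral_const,
        Real.volume_real_Ioo_of_le (by linarith [hε.2] : ε ≤ r)]
      simp
    · intro x hx
      rw [← himg] at hx
      obtain ⟨s, hs, rfl⟩ := hx
      have hs0 : (0:ℝ) < s := lt_trans hε.1 hs.1
      have hse : (s : EReal) < extTime f := lt_trans (EReal.coe_lt_coe_iff.mpr hs.2) hre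
      have hψ : ψ (1 - f s / a) = |fd s| ^ p / a ^ p := hrel s hs0.le hse
      simp only [hh, hφ]
      rw [hψ]
      exact Real.rpow_nonneg (div_nonneg (Real.rpow_nonneg (abs_nonneg _) _)
        (Real.rpow_nonneg ha.le _)) _
  -- sequence of ε's tending to 0
  set ε : ℕ → ℝ := fun n => r / (n+2) with hεd
  have hεmem : ∀ n, ε n ∈ Set.Ioo (0:ℝ) r := by
    intro n
    constructor
    · positivity
    · apply div_lt_self hr
      have : (0:ℝ) ≤ (n:ℝ) := Nat.cast_nonneg n
      linarith
  have hεanti : ∀ n m : ℕ, n ≤ m → ε m ≤ ε n := by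
    intro n m hnm
    apply div_le_div_of_nonneg_left hr.le (by positivity)
    have : (n:ℝ) ≤ (m:ℝ) := Nat.cast_le.mpr hnm
    linarith
  have hεto : Tendsto ε atTop (𝓝 0) := by
    rw [hεd]
    have h1 : Tendsto (fun n : ℕ => ((n:ℝ)+2)) atTop atTop := by
      apply tendsto_atTop_add_const_right
      exact tendsto_natCast_atTop_atTop
    simpa using Tendsto.div_atTop (tendsto_const_nhds (x := r)) h1
  set S : ℕ → Set ℝ := fun n => Set.Ioo (φ r) (φ (ε n)) with hSd
  have hφmono : ∀ n m : ℕ, n ≤ m → φ (ε n) ≤ φ (ε m) := by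
    intro n m hnm
    have h1 : ε m ≤ ε n := hεanti n m hnm
    have hn : ε n ∈ Set.Icc (0:ℝ) r := ⟨(hεmem n).1.le, (hεmem n).2.le⟩
    have hm : ε m ∈ Set.Icc (0:ℝ) r := ⟨(hεmem m).1.le, (hεmem m).2.le⟩
    exact (div_le_div_iff_of_pos_right ha).mpr (hanti.antitoneOn hm hn h1)
  have hSmono : Monotone S := by
    intro n m hnm
    exact Set.Ioo_subset_Ioo le_rfl (hφmono n m hnm)
  have hφr1 : ∀ n, φ (ε n) < 1 := by
    intro n
    have h1 : f (ε n) < f 0 := hanti ⟨le_rfl, hr.le⟩ ⟨(hεmem n).1.le, (hεmem n).2.le⟩ (hεmem n).1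
    rw [hf.2.2.2.2.2.1] at h1
    rw [hφ]
    rw [div_lt_one ha]
    exact h1
  have hSsub : ∀ n, S n ⊆ Set.Ioo (φ r) 1 :=
    fun n => Set.Ioo_subset_Ioo le_rfl (hφr1 n).le
  have hφto : Tendsto (fun n => φ (ε n)) atTop (𝓝 1) := by
    have h1 : Tendsto (fun n => f (ε n)) atTop (𝓝 a) := by
      have hc : ContinuousWithinAt f (Set.Ici 0) 0 := (contf hf) 0 Set.self_mem_Ici
      have h2 : Tendsto ε atTop (𝓝[Set.Ici 0] 0) :=
        tendsto_nhdsWithin_of_tendsto_nhds_of_eventually_within _ hεto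
          (Eventually.of_forall fun n => (hεmem n).1.le)
      have := hc.tendsto.comp h2
      rwa [hf.2.2.2.2.2.1] at this
    have h2 := h1.div_const a
    rwa [div_self ha.ne'] at h2
  -- the AECover
  have hcover : AECover (volume.restrict (Set.Ioo (φ r) 1)) atTop S := by
    constructor
    · filter_upwards [ae_restrict_mem measurableSet_Ioo] with x hx
      have h1 : ∀ᶠ n in atTop, x < φ (ε n) := hφto.eventually (eventually_gt_nhds hx.2)
      filter_upwards [h1] with n hn
      exact ⟨hx.1, hn⟩
    · exact fun n => measurableSet_Ioo
  have hrestrict : ∀ n, (volume.restrict (Set.Ioo (φ r) 1)).restrict (S n) = volume.restrict (S n) := by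
    intro n
    rw [Measure.restrict_restrict measurableSet_Ioo]
    rw [Set.inter_eq_self_of_subset_left (hSsub n)]
  have hInt : IntegrableOn h (Set.Ioo (φ r) 1) volume := by
    apply hcover.integrable_of_integral_norm_bounded r
    · intro n
      rw [IntegrableOn, hrestrict n]
      exact ((main (ε n) (hεmem n)).1).1
    · filter_upwards with n
      rw [show ∫ x in S n, ‖h x‖ ∂(volume.restrict (Set.Ioo (φ r) 1))
          = ∫ x in S n, ‖h x‖ ∂volume by rw [← hrestrict n]]
      have hnn := (main (ε n) (hεmem n)).2
      rw [MeasureTheory.setIntegral_congr_fun measurableSet_Ioo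
        (fun x hx => Real.norm_of_nonneg (hnn x hx))]
      rw [((main (ε n) (hεmem n)).1).2]
      linarith [(hεmem n).1]
  have hval : ∫ z in Set.Ioo (φ r) 1, h z = r := by
    have h1 := hcover.integral_tendsto_of_countably_generated (f := h) hInt
    have h2 : Tendsto (fun n => ∫ x in S n, h x ∂(volume.restrict (Set.Ioo (φ r) 1)))
        atTop (𝓝 r) := by
      have heq : ∀ n, ∫ x in S n, h x ∂(volume.restrict (Set.Ioo (φ r) 1)) = r - ε n := by
        intro n
        rw [show ∫ x in S n, h x ∂(volume.restrict (Set.Ioo (φ r) 1))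
            = ∫ x in S n, h x ∂volume by rw [← hrestrict n]]
        exact ((main (ε n) (hεmem n)).1).2
      simp only [heq]
      simpa using tendsto_const_nhds.sub hεto
    exact tendsto_nhds_unique h1 h2
  exact ⟨hInt, hval⟩

lemma exists_s0 (hp : p ∈ Set.Ioo (1:ℝ) 2) (ha : 0 < a) (hf : IsSol p a f fd gd) :
    ∀ z₀ ∈ Set.Ioo (0:ℝ) 1, ∃ s₀ : ℝ, 0 < s₀ ∧ (s₀ : EReal) < extTime f ∧ f s₀ < a * z₀ := by
  intro z₀ hz₀
  set Z : Set ℝ := {s : ℝ | 0 < s ∧ f s = 0} with hZ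
  rcases Z.eq_empty_or_nonempty with hZe | hZne
  · have hext : extTime f = ⊤ := by
      rw [extTime]
      convert sInf_empty
      case e'_2.e'_2 => rfl
      rw [Set.eq_empty_iff_forall_notMem]
      rintro x ⟨s, hs1, hs2, rfl⟩
      rw [Set.eq_empty_iff_forall_notMem] at hZe
      exact hZe s ⟨hs1, hs2⟩
    have hnz : ∀ s : ℝ, 0 < s → f s ≠ 0 := by
      intro s hs hfs
      rw [Set.eq_empty_iff_forall_notMem] at hZe
      exact hZe s ⟨hs, hfs⟩
    obtain ⟨s₀, hs₀, hlt⟩ := small_f hp ha hf hnz (a * z₀) (mul_pos ha hz₀.1)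
    have hs0ne : s₀ ≠ 0 := by
      intro h
      rw [h, hf.2.2.2.2.2.1] at hlt
      nlinarith [hz₀.2]
    exact ⟨s₀, lt_of_le_of_ne hs₀ (Ne.symm hs0ne),
      by rw [hext]; exact EReal.coe_lt_top s₀, hlt⟩
  · set R₀ : ℝ := sInf Z with hR
    have hbdd : BddBelow Z := ⟨0, fun s hs => hs.1.le⟩
    have hR0 : 0 ≤ R₀ := le_csInf hZne (fun s hs => hs.1.le)
    have hfR : f R₀ = 0 := by
      have hseq : ∀ n : ℕ, ∃ s ∈ Z, s < R₀ + 1/(n+1) := by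
        intro n
        apply exists_lt_of_csInf_lt hZne
        have : (0:ℝ) < 1/((n:ℝ)+1) := by positivity
        linarith
      choose seq hseqZ hseqlt using hseq
      have hge : ∀ n, R₀ ≤ seq n := fun n => csInf_le hbdd (hseqZ n)
      have hto : Tendsto seq atTop (𝓝 R₀) := by
        have h0 : Tendsto (fun n : ℕ => R₀ + 1/((n:ℝ)+1)) atTop (𝓝 R₀) := by
          have h1 : Tendsto (fun n : ℕ => 1/((n:ℝ)+1)) atTop (𝓝 0) :=
            tendsto_one_div_add_atTop_nhds_zero_nat
          simpa using tendsto_const_nhds.add h1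
        exact tendsto_of_tendsto_of_tendsto_of_le_of_le tendsto_const_nhds h0 hge
          (fun n => (hseqlt n).le)
      have hcw : ContinuousWithinAt f (Set.Ici 0) R₀ := (contf hf) R₀ hR0
      have h2 : Tendsto (fun n => f (seq n)) atTop (𝓝 (f R₀)) :=
        hcw.tendsto.comp (tendsto_nhdsWithin_of_tendsto_nhds_of_eventually_within _ hto
          (Eventually.of_forall fun n => (hseqZ n).1.le))
      have h3 : (fun n => f (seq n)) = fun _ => (0:ℝ) := funext fun n => (hseqZ n).2
      rw [h3] at h2
      exact tendsto_nhds_unique h2 tendsto_const_nhds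
    have hR0pos : 0 < R₀ := by
      rcases hR0.lt_or_eq with h | h
      · exact h
      · exfalso
        rw [← h, hf.2.2.2.2.2.1] at hfR
        linarith
    have hRle : (R₀ : EReal) ≤ extTime f := by
      apply le_sInf
      rintro x ⟨s, hs1, hs2, rfl⟩
      exact_mod_cast csInf_le hbdd ⟨hs1, hs2⟩
    have hIVT : a * z₀ / 2 ∈ Set.Ioo (f R₀) (f 0) := by
      rw [hfR, hf.2.2.2.2.2.1]
      constructor
      · exact div_pos (mul_pos ha hz₀.1) two_pos
      · nlinarith [hz₀.2, hz₀.1]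
    obtain ⟨s₀, hs₀, hfs₀⟩ := intermediate_value_Ioo' hR0pos.le
      ((contf hf).mono Set.Icc_subset_Ici_self) hIVT
    refine ⟨s₀, hs₀.1, lt_of_lt_of_le ?_ hRle, ?_⟩
    · exact_mod_cast hs₀.2
    · rw [hfs₀]
      nlinarith [hz₀.1]

end Main

/-- The function `z ↦ ψ(1-z)^{-1/p}` belongs to `L¹(z₀,1)` for every
`z₀ ∈ (0,1)`, and `∫_{f(r)/a}^{1} ψ(1-z)^{-1/p} dz = r` for every `r ∈ [0,R(a))`. -/
theorem stmt16 (p a : ℝ) (hp : p ∈ Set.Ioo (1:ℝ) 2) (ha : 0 < a)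
    (f fd gd ψ : ℝ → ℝ) (hf : IsSol p a f fd gd) (hrel : PsiRel p a f fd ψ) :
    (∀ z₀ ∈ Set.Ioo (0:ℝ) 1,
      IntegrableOn (fun z => ψ (1-z) ^ (-(1/p))) (Set.Ioc z₀ 1) volume) ∧
    (∀ r : ℝ, 0 ≤ r → (r : EReal) < extTime f →
      ∫ z in (f r / a)..1, ψ (1-z) ^ (-(1/p)) = r) := by
  constructor
  · intro z₀ hz₀
    obtain ⟨s₀, hs₀pos, hs₀e, hs₀lt⟩ := exists_s0 hp ha hf z₀ hz₀
    have hkey := key_lemma hp ha hf hrel hs₀pos hs₀e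
    have hsub : Set.Ioc z₀ 1 ⊆ Set.Ioo (f s₀ / a) 1 ∪ {1} := by
      intro z hz
      rcases lt_or_eq_of_le hz.2 with h1 | h1
      · left
        refine ⟨lt_trans ?_ hz.1, h1⟩
        rw [div_lt_iff₀ ha]
        linarith [hs₀lt]
      · right
        simp [h1]
    have hone : IntegrableOn (fun z => ψ (1-z) ^ (-(1/p))) {1} volume := by
      rw [IntegrableOn, Measure.restrict_eq_zero.mpr (by simp)]
      exact integrable_zero_measure
    exact (hkey.1.union hone).mono_set hsub
  · intro r hr hre
    rcases hr.lt_or_eq with hrpos | hrz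
    · have hfpos : ∀ s ∈ Set.Icc (0:ℝ) r, 0 < f s := by
        intro s hs
        exact f_pos ha hf s hs.1 (lt_of_le_of_lt (EReal.coe_le_coe_iff.mpr hs.2) hre)
      have hfr : f r < a := by
        have h1 := (f_anti hp ha hf hfpos) (Set.left_mem_Icc.mpr hrpos.le)
          (Set.right_mem_Icc.mpr hrpos.le) hrpos
        rwa [hf.2.2.2.2.2.1] at h1
      have hle : f r / a ≤ 1 := by
        rw [div_le_one ha]
        exact hfr.le
      rw [intervalIntegral.integral_of_le hle, MeasureTheory.integral_Ioc_eq_integral_Ioo]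
      exact (key_lemma hp ha hf hrel hrpos hre).2
    · rw [← hrz, hf.2.2.2.2.2.1, div_self ha.ne', intervalIntegral.integral_same]
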